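/- arXiv:2502.06792 — 3 statements merged into one kernel-verified Lean document; each statement's English description precedes it below -/
import Mathlib

section
/- For every prime p > 5, if the residues 2!, 3!, …, (p−1)! modulo p are pairwise distinct, then p ≡ 5 (mod 8). -/
open Finset Nat

private lemma rs_cast_ne (p : ℕ) [Fact p.Prime] {a : ℕ} (h1 : 0 < a) (h2 : a < p) :
    (a : ZMod p) ≠ 0 := by
  intro h
  rw [ZMod.natCast_eq_zero_iff] at h
  exact absurd (Nat.le_of_dvd h1 h) (by omega)

private lemma rs_fact_pair (p : ℕ) [hp : Fact p.Prime] (j : ℕ) (hj : j ≤ p - 1) :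
    ((j ! : ZMod p) * ((p - 1 - j)! : ZMod p)) = (-1) ^ (j + 1) := by
  have hp2 : 2 ≤ p := hp.out.two_le
  induction j with
  | zero => simp [ZMod.wilsons_lemma p]
  | succ j ih =>
    have hj' : j ≤ p - 1 := by omega
    have ihh := ih hj'
    have h1 : p - 1 - j = (p - 1 - (j + 1)) + 1 := by omega
    rw [h1, Nat.factorial_succ] at ihh
    have hcast : ((p - 1 - (j + 1) + 1 : ℕ) : ZMod p) = -((j : ZMod p) + 1) := by
      have h2 : (p - 1 - (j + 1) + 1) + (j + 1) = p := by omega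
      have h3 := congrArg (Nat.cast : ℕ → ZMod p) h2
      push_cast at h3
      rw [ZMod.natCast_self] at h3
      push_cast
      linear_combination h3
    rw [Nat.cast_mul, hcast] at ihh
    have hne : -((j : ZMod p) + 1) ≠ 0 := by
      have := rs_cast_ne p (a := j + 1) (by omega) (by omega)
      push_cast at this
      exact neg_ne_zero.mpr this
    apply mul_left_cancel₀ hne
    rw [Nat.factorial_succ]
    push_cast
    linear_combination ((j : ZMod p) + 1) * ihh

/-- Product of all nonzero residues is -1. -/
private lemma rs_prod_nonzero (p : ℕ) [hp : Fact p.Prime] :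
    ∏ v ∈ (Finset.univ.erase (0 : ZMod p)), v = -1 := by
  have hp2 : 2 ≤ p := hp.out.two_le
  have himg : (Finset.univ.erase (0 : ZMod p)) = (Ico 1 p).image (Nat.cast : ℕ → ZMod p) := by
    ext v
    simp only [Finset.mem_erase, Finset.mem_univ, and_true, Finset.mem_image, Finset.mem_Ico]
    constructor
    · intro hv
      refine ⟨v.val, ⟨?_, ZMod.val_lt v⟩, ZMod.natCast_zmod_val v⟩
      have := (ZMod.val_eq_zero v).not.mpr hv
      omega
    · rintro ⟨a, ⟨ha1, ha2⟩, rfl⟩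
      exact rs_cast_ne p ha1 ha2
  rw [himg, Finset.prod_image ?_]
  · exact ZMod.prod_Ico_one_prime p
  · intro a ha b hb hab
    simp only [Finset.mem_coe, Finset.mem_Ico] at ha hb
    have h1 : (a : ZMod p).val = a := ZMod.val_cast_of_lt ha.2
    have h2 : (b : ZMod p).val = b := ZMod.val_cast_of_lt hb.2
    rw [← h1, ← h2, hab]

/-- For every prime `p > 5`, if the residues `2!, 3!, …, (p-1)!` modulo `p`
are pairwise distinct, then `p ≡ 5 (mod 8)`. -/
theorem pairwise_distinct_factorials_imp_five_mod_eight (p : ℕ)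
    (hp : Nat.Prime p) (hp5 : 5 < p)
    (hdist : ∀ a b : ℕ, 2 ≤ a → a < b → b ≤ p - 1 →
      ¬ Nat.factorial a ≡ Nat.factorial b [MOD p]) :
    p % 8 = 5 := by
  haveI hpf : Fact p.Prime := ⟨hp⟩
  haveI hp2f : Fact (2 < p) := ⟨by omega⟩
  have hodd : p % 2 = 1 := Nat.odd_iff.mp (hp.odd_of_ne_two (by omega))
  have hne1 : (-1 : ZMod p) ≠ 1 := ZMod.neg_one_ne_one
  set n := (p - 1) / 2 with hn
  have hn2 : n + n = p - 1 := by omega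
  -- distinctness, in ZMod form
  have hdz : ∀ a b : ℕ, 2 ≤ a → 2 ≤ b → a ≠ b → a ≤ p - 1 → b ≤ p - 1 →
      (a ! : ZMod p) ≠ (b ! : ZMod p) := by
    intro a b ha hb hne ha1 hb1 h
    rcases Nat.lt_or_ge a b with h' | h'
    · exact hdist a b ha h' hb1 ((ZMod.natCast_eq_natCast_iff _ _ _).mp h)
    · exact hdist b a hb (by omega) ha1 ((ZMod.natCast_eq_natCast_iff _ _ _).mp h.symm)
  set x : ZMod p := (n ! : ZMod p) with hx
  have hwil : (((p - 1)! : ℕ) : ZMod p) = -1 := ZMod.wilsons_lemma p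
  have hpm2 : (((p - 2)! : ℕ) : ZMod p) = 1 := by
    have h := rs_fact_pair p 1 (by omega)
    rw [show p - 1 - 1 = p - 2 by omega] at h
    simpa using h
  have hx2 : x * x = (-1) ^ (n + 1) := by
    have h := rs_fact_pair p n (by omega)
    rwa [show p - 1 - n = n by omega] at h
  -- p ≡ 1 mod 4
  have hp4 : p % 4 = 1 := by
    by_contra h4
    have hnodd : n % 2 = 1 := by omega
    have hxx : x * x = 1 := by
      rw [hx2, (Nat.even_iff.mpr (by omega) : Even (n + 1)).neg_one_pow]
    rcases mul_self_eq_one_iff.mp hxx with h | h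
    · exact hdz n (p - 2) (by omega) (by omega) (by omega) (by omega) (by omega)
        (by rw [← hx, h, hpm2])
    · exact hdz n (p - 1) (by omega) (by omega) (by omega) (by omega) (by omega)
        (by rw [← hx, h, hwil])
  set m := (p - 1) / 4 with hm
  have hnm : n = 2 * m := by omega
  have hx2' : x * x = -1 := by
    rw [hx2, (Nat.odd_iff.mpr (by omega) : Odd (n + 1)).neg_one_pow]
  have hx0 : x ≠ 0 := by
    intro h
    rw [h, mul_zero] at hx2'
    exact one_ne_zero (α := ZMod p) (by linear_combination hx2')
  have hnx0 : -x ≠ 0 := neg_ne_zero.mpr hx0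
  -- -x is not a factorial
  have hnegx : ∀ a : ℕ, 2 ≤ a → a ≤ p - 1 → (a ! : ZMod p) ≠ -x := by
    intro a ha hale h
    rcases eq_or_ne a (p - 1) with rfl | ha1
    · rw [hwil] at h
      exact hne1 (by linear_combination (x + 1) * h - hx2')
    rcases eq_or_ne a (p - 2) with rfl | ha2
    · rw [hpm2] at h
      exact hne1 (by linear_combination (x - 1) * h - hx2')
    rcases eq_or_ne a n with rfl | han
    · rw [← hx] at h
      exact hne1 (by linear_combination x * h - 2 * hx2')
    · have hb2 : 2 ≤ p - 1 - a := by omega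
      have hbn : p - 1 - a ≠ n := by omega
      have hba : p - 1 - a ≠ a := by omega
      have hab := rs_fact_pair p a (by omega)
      rcases Nat.even_or_odd a with he | ho
      · have hpow : ((-1 : ZMod p)) ^ (a + 1) = -1 := (Nat.odd_iff.mpr
          (by have := Nat.even_iff.mp he; omega)).neg_one_pow
        rw [h, hpow] at hab
        have : ((p - 1 - a)! : ZMod p) = (a ! : ZMod p) := by
          apply mul_left_cancel₀ hnx0
          rw [hab, h]
          linear_combination -hx2'
        exact hdz (p - 1 - a) a hb2 ha hba (by omega) (by omega) this
      · have hpow : ((-1 : ZMod p)) ^ (a + 1) = 1 := (Nat.even_iff.mpr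
          (by have := Nat.odd_iff.mp ho; omega)).neg_one_pow
        rw [h, hpow] at hab
        have : ((p - 1 - a)! : ZMod p) = (n ! : ZMod p) := by
          apply mul_left_cancel₀ hnx0
          rw [hab, ← hx]
          linear_combination hx2'
        exact hdz (p - 1 - a) n hb2 (by omega) hbn (by omega) (by omega) this
  -- the product of all factorials 2!,...,(p-1)!
  set f : ℕ → ZMod p := fun a => ((a ! : ℕ) : ZMod p) with hf
  set P : ZMod p := ∏ a ∈ Ico 2 p, f a with hP
  -- compute P via pairing
  have hsplit : P = ((∏ j ∈ Ico 2 n, (f j * f (p - 1 - j))) * f n) * f (p - 2) * f (p - 1) := by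
    have e0 : Ico 2 p = Ico 2 ((p - 2) + 1 + 1) := by rw [show p - 2 + 1 + 1 = p by omega]
    rw [hP, e0, prod_Ico_succ_top (by omega), prod_Ico_succ_top (by omega),
      show p - 2 + 1 = p - 1 by omega]
    congr 1
    congr 1
    have himg : Ico (n + 1) (p - 2) = (Ico 2 n).image (fun j => p - 1 - j) := by
      ext k
      simp only [Finset.mem_Ico, Finset.mem_image]
      constructor
      · intro hk
        exact ⟨p - 1 - k, by omega, by omega⟩
      · rintro ⟨j, hj, rfl⟩
        omega
    rw [← prod_Ico_consecutive f (show 2 ≤ n + 1 by omega) (show n + 1 ≤ p - 2 by omega),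
      prod_Ico_succ_top (show 2 ≤ n by omega), himg,
      Finset.prod_image (by intro a ha b hb hab; simp only [Finset.mem_coe, Finset.mem_Ico] at ha hb hab; omega),
      Finset.prod_mul_distrib]
    ring
  have hpair : ∀ j ∈ Ico 2 n, f j * f (p - 1 - j) = (-1 : ZMod p) ^ (j + 1) := by
    intro j hj
    exact rs_fact_pair p j (by simp only [Finset.mem_Ico] at hj; omega)
  have hprodpow : (∏ j ∈ Ico 2 n, (f j * f (p - 1 - j))) = (-1 : ZMod p) ^ (m + 1) := by
    rw [Finset.prod_congr rfl hpair, Finset.prod_pow_eq_pow_sum]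
    have hS : (∑ j ∈ Ico 0 2, (j + 1)) + (∑ j ∈ Ico 2 n, (j + 1)) = ∑ j ∈ Ico 0 n, (j + 1) :=
      Finset.sum_Ico_consecutive _ (by omega) (by omega)
    have hS0 : (∑ j ∈ Ico 0 2, (j + 1)) = 3 := by decide
    have hSn : (∑ j ∈ Ico 0 n, (j + 1)) = (∑ i ∈ range n, i) + n := by
      rw [← Finset.range_eq_Ico, Finset.sum_add_distrib, Finset.sum_const, Finset.card_range,
        smul_eq_mul, mul_one]
    have hm1 : 1 ≤ m := by omega
    have hT2 : (∑ i ∈ range n, i) * 2 = 2 * (m * (2 * m - 1)) := by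
      rw [Finset.sum_range_id_mul_two, hnm]
      ring
    have hu2 : (m * (2 * m - 1)) % 2 = m % 2 := by
      rcases Nat.even_or_odd m with he | ho
      · rw [Nat.even_iff.mp (he.mul_right _), Nat.even_iff.mp he]
      · rw [Nat.odd_iff.mp (ho.mul (Nat.odd_iff.mpr (by omega))), Nat.odd_iff.mp ho]
    have hpar : (∑ j ∈ Ico 2 n, (j + 1)) % 2 = (m + 1) % 2 := by omega
    rcases Nat.even_or_odd (m + 1) with he | ho
    · rw [he.neg_one_pow, (Nat.even_iff.mpr (by have := Nat.even_iff.mp he; omega) :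
        Even (∑ j ∈ Ico 2 n, (j + 1))).neg_one_pow]
    · rw [ho.neg_one_pow, (Nat.odd_iff.mpr (by have := Nat.odd_iff.mp ho; omega) :
        Odd (∑ j ∈ Ico 2 n, (j + 1))).neg_one_pow]
  have hPval : P = (-1 : ZMod p) ^ (m + 1) * x * -1 := by
    rw [hsplit, hprodpow]
    have h1 : f n = x := rfl
    have h2 : f (p - 2) = 1 := hpm2
    have h3 : f (p - 1) = -1 := hwil
    rw [h1, h2, h3]
    ring
  -- the image of the factorials is everything except 0 and -x
  have hinj : ∀ a ∈ Ico 2 p, ∀ b ∈ Ico 2 p, f a = f b → a = b := by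
    intro a ha b hb hfab
    simp only [Finset.mem_Ico] at ha hb
    by_contra hne
    exact hdz a b ha.1 hb.1 hne (by omega) (by omega) hfab
  have hcard : ((Ico 2 p).image f).card = p - 2 := by
    rw [Finset.card_image_of_injOn hinj, Nat.card_Ico]
  have hsub : (Ico 2 p).image f ⊆ (Finset.univ.erase (0 : ZMod p)).erase (-x) := by
    intro v hv
    rw [Finset.mem_image] at hv
    obtain ⟨a, ha, rfl⟩ := hv
    simp only [Finset.mem_Ico] at ha
    rw [Finset.mem_erase, Finset.mem_erase]
    refine ⟨hnegx a ha.1 (by omega), ?_, Finset.mem_univ _⟩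
    intro h0
    have hab := rs_fact_pair p a (by omega)
    rw [hf] at h0
    simp only at h0
    rw [h0, zero_mul] at hab
    exact (pow_ne_zero (a + 1) (neg_ne_zero.mpr (one_ne_zero : (1 : ZMod p) ≠ 0))) hab.symm
  have hseteq : (Ico 2 p).image f = (Finset.univ.erase (0 : ZMod p)).erase (-x) := by
    apply Finset.eq_of_subset_of_card_le hsub
    rw [hcard, Finset.card_erase_of_mem (Finset.mem_erase.mpr ⟨hnx0, Finset.mem_univ _⟩),
      Finset.card_erase_of_mem (Finset.mem_univ _), Finset.card_univ, ZMod.card]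
    omega
  have hprodall : -x * P = -1 := by
    have h1 : ∏ v ∈ (Ico 2 p).image f, v = ∏ a ∈ Ico 2 p, f a := Finset.prod_image hinj
    rw [hP, ← h1, hseteq]
    calc -x * ∏ v ∈ ((univ.erase (0 : ZMod p)).erase (-x)), v
        = ∏ v ∈ (univ.erase (0 : ZMod p)), v :=
          Finset.mul_prod_erase _ (fun v => v)
            (Finset.mem_erase.mpr ⟨hnx0, Finset.mem_univ _⟩)
      _ = -1 := rs_prod_nonzero p
  -- conclude
  have hfinal : (-1 : ZMod p) ^ (m + 1) = 1 := by
    rw [hPval] at hprodall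
    have hcan : (-1 : ZMod p) ^ (m + 1) * (x * x) = -1 := by
      linear_combination hprodall
    rw [hx2'] at hcan
    linear_combination -hcan
  have hmodd : m % 2 = 1 := by
    by_contra hme
    have : Odd (m + 1) := Nat.odd_iff.mpr (by omega)
    rw [this.neg_one_pow] at hfinal
    exact hne1 hfinal
  omega
end

section
/- If a Steiner triple system on a set V contains a proper subsystem on a subset W ⊆ V with |W| = s and |V| = v, then v ≥ 2s + 1. -/
/-- `B` is a Steiner system with blocks of size `k` on point set `V`, where every
`t`-element subset of `V` lies in exactly one block. -/
def IsSteinerSystem {α : Type*} [DecidableEq α] (V : Finset α)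
    (B : Finset (Finset α)) (k t : ℕ) : Prop :=
  (∀ b ∈ B, b ⊆ V ∧ b.card = k) ∧
  ∀ s ⊆ V, s.card = t → ∃! b, b ∈ B ∧ s ⊆ b

/-- If a Steiner triple system on `V` contains a proper subsystem on `W ⊆ V`
(`|W| ≥ 3`, `W ≠ V`), then `|V| ≥ 2|W| + 1`. -/
theorem sts_subsystem_doyen_wilson {α : Type*} [DecidableEq α]
    (V W : Finset α) (B B' : Finset (Finset α))
    (h : IsSteinerSystem V B 3 2)
    (hW : W ⊆ V) (hWcard : 3 ≤ W.card) (hWne : W ≠ V)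
    (hsub : B' ⊆ B) (h' : IsSteinerSystem W B' 3 2) :
    2 * W.card + 1 ≤ V.card := by
  obtain ⟨hB1, hB2⟩ := h
  obtain ⟨hB'1, hB'2⟩ := h'
  -- any block of B containing two distinct points of W lies entirely in W
  have hWblock : ∀ b ∈ B, ∀ u ∈ W, ∀ v ∈ W, u ≠ v → u ∈ b → v ∈ b → b ⊆ W := by
    intro b hb u hu v hv huv hub hvb
    have hpair : ({u, v} : Finset α) ⊆ W := by
      intro a ha; simp only [Finset.mem_insert, Finset.mem_singleton] at ha
      rcases ha with rfl | rfl <;> assumption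
    have hcard : ({u, v} : Finset α).card = 2 := Finset.card_pair huv
    obtain ⟨b', ⟨hb'B', hb'sub⟩, _⟩ := hB'2 _ hpair hcard
    obtain ⟨b2, hb2, huniq⟩ := hB2 _ (hpair.trans hW) hcard
    have e1 : b = b2 := huniq b ⟨hb, by
      intro a ha; simp only [Finset.mem_insert, Finset.mem_singleton] at ha
      rcases ha with rfl | rfl <;> assumption⟩
    have e2 : b' = b2 := huniq b' ⟨hsub hb'B', hb'sub⟩
    rw [e1, ← e2]
    exact (hB'1 b' hb'B').1
  obtain ⟨x, hxV, hxW⟩ : ∃ x ∈ V, x ∉ W := by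
    by_contra hc
    push_neg at hc
    exact hWne (Finset.Subset.antisymm hW hc)
  have key : ∀ w ∈ W, ∃ z, z ∈ V ∧ z ∉ W ∧ z ≠ x ∧ ∃ b ∈ B, x ∈ b ∧ w ∈ b ∧ z ∈ b := by
    intro w hw
    have hxw : x ≠ w := fun hh => hxW (hh ▸ hw)
    have hpairV : ({x, w} : Finset α) ⊆ V := by
      intro a ha; simp only [Finset.mem_insert, Finset.mem_singleton] at ha
      rcases ha with rfl | rfl
      · exact hxV
      · exact hW hw
    obtain ⟨b, ⟨hbB, hbsub⟩, _⟩ := hB2 _ hpairV (Finset.card_pair hxw)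
    have hbcard := (hB1 b hbB).2
    have hxb : x ∈ b := hbsub (by simp)
    have hwb : w ∈ b := hbsub (by simp)
    have h1 : (b \ {x, w}).card = 1 := by
      rw [Finset.card_sdiff_of_subset hbsub, hbcard, Finset.card_pair hxw]
    obtain ⟨z, hz⟩ := Finset.card_eq_one.mp h1
    have hzmem : z ∈ b \ ({x, w} : Finset α) := hz ▸ Finset.mem_singleton_self z
    simp only [Finset.mem_sdiff, Finset.mem_insert, Finset.mem_singleton, not_or] at hzmem
    obtain ⟨hzb, hzx, hzw⟩ := hzmem
    refine ⟨z, (hB1 b hbB).1 hzb, ?_, hzx, b, hbB, hxb, hwb, hzb⟩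
    intro hzW
    exact hxW (hWblock b hbB w hw z hzW (Ne.symm hzw) hwb hzb hxb)
  choose! f hf1 hf2 hf3 hf4 using key
  have hmaps : ∀ w ∈ W, f w ∈ (V \ W).erase x := by
    intro w hw
    simp only [Finset.mem_erase, Finset.mem_sdiff]
    exact ⟨hf3 w hw, hf1 w hw, hf2 w hw⟩
  have hinj : ∀ w ∈ W, ∀ w' ∈ W, f w = f w' → w = w' := by
    intro w hw w' hw' heq
    obtain ⟨b, hb, hxb, hwb, hzb⟩ := hf4 w hw
    obtain ⟨b', hb', hxb', hwb', hzb'⟩ := hf4 w' hw'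
    have hpair : ({x, f w} : Finset α) ⊆ V := by
      intro a ha; simp only [Finset.mem_insert, Finset.mem_singleton] at ha
      rcases ha with rfl | rfl
      · exact hxV
      · exact hf1 w hw
    obtain ⟨c, hc, huniq⟩ := hB2 _ hpair (Finset.card_pair (Ne.symm (hf3 w hw)))
    have e1 : b = c := huniq b ⟨hb, by
      intro a ha; simp only [Finset.mem_insert, Finset.mem_singleton] at ha
      rcases ha with rfl | rfl <;> assumption⟩
    have e2 : b' = c := huniq b' ⟨hb', by
      intro a ha; simp only [Finset.mem_insert, Finset.mem_singleton] at ha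
      rcases ha with rfl | rfl
      · exact hxb'
      · rw [heq]; exact hzb'⟩
    have hwb' : w' ∈ b := by rw [e1, ← e2]; exact hwb'
    -- b has card 3 and contains x, w, f w which are pairwise distinct
    have hbcard := (hB1 b hb).2
    have hsubb : ({x, w, f w} : Finset α) ⊆ b := by
      intro a ha; simp only [Finset.mem_insert, Finset.mem_singleton] at ha
      rcases ha with rfl | rfl | rfl <;> assumption
    have hxw : x ≠ w := fun hh => hxW (hh ▸ hw)
    have hwfw : w ≠ f w := fun hh => hf2 w hw (hh ▸ hw)
    have hcard3 : ({x, w, f w} : Finset α).card = 3 := by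
      rw [Finset.card_insert_of_notMem, Finset.card_pair hwfw]
      simp only [Finset.mem_insert, Finset.mem_singleton, not_or]
      exact ⟨hxw, Ne.symm (hf3 w hw)⟩
    have heqb : ({x, w, f w} : Finset α) = b :=
      Finset.eq_of_subset_of_card_le hsubb (by rw [hbcard, hcard3])
    have : w' ∈ ({x, w, f w} : Finset α) := heqb ▸ hwb'
    simp only [Finset.mem_insert, Finset.mem_singleton] at this
    rcases this with rfl | rfl | rfl
    · exact absurd hw' hxW
    · rfl
    · exact absurd hw' (hf2 w hw)
  have hle : W.card ≤ ((V \ W).erase x).card :=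
    Finset.card_le_card_of_injOn f hmaps hinj
  have hx : x ∈ V \ W := Finset.mem_sdiff.mpr ⟨hxV, hxW⟩
  have h1 : ((V \ W).erase x).card = (V \ W).card - 1 := Finset.card_erase_of_mem hx
  have h2 : (V \ W).card = V.card - W.card := Finset.card_sdiff_of_subset hW
  have h3 : 1 ≤ (V \ W).card := Finset.card_pos.mpr ⟨x, hx⟩
  have h4 : W.card ≤ V.card := Finset.card_le_card hW
  omega
end

section
/- Two Steiner triple systems on the same 9-element set are always isomorphic (the affine plane AG(2,3) is the unique STS(9) up to isomorphism). -/
/-- `f` is an isomorphism of the block system `(V₁, B₁)` with `(V₂, B₂)`. -/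
def IsSTSIso {α β : Type*} [DecidableEq α] [DecidableEq β]
    (V₁ : Finset α) (B₁ : Finset (Finset α))
    (V₂ : Finset β) (B₂ : Finset (Finset β)) (f : α → β) : Prop :=
  Set.BijOn f (V₁ : Set α) (V₂ : Set β) ∧
  ∀ b ⊆ V₁, (b ∈ B₁ ↔ b.image f ∈ B₂)


set_option linter.unusedSectionVars false

namespace STS9Aux

variable {α : Type*} [DecidableEq α] {V : Finset α} {B : Finset (Finset α)}

lemma pair_card {a b : α} (h : a ≠ b) : ({a, b} : Finset α).card = 2 := by
  rw [Finset.card_insert_of_notMem (by simp [h]), Finset.card_singleton]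

lemma swap12 (a b c : α) : ({a, b, c} : Finset α) = {b, a, c} := by
  ext z; simp only [Finset.mem_insert, Finset.mem_singleton]; tauto

lemma swap23 (a b c : α) : ({a, b, c} : Finset α) = {a, c, b} := by
  ext z; simp only [Finset.mem_insert, Finset.mem_singleton]; tauto

lemma blocks_eq (hB : IsSteinerSystem V B 3 2) {b1 b2 : Finset α}
    (h1 : b1 ∈ B) (h2 : b2 ∈ B) {p q : α}
    (hp1 : p ∈ b1) (hq1 : q ∈ b1) (hp2 : p ∈ b2) (hq2 : q ∈ b2) (hpq : p ≠ q) :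
    b1 = b2 := by
  have hsub : ({p, q} : Finset α) ⊆ V := by
    intro t ht
    rcases Finset.mem_insert.mp ht with rfl | ht
    · exact (hB.1 b1 h1).1 hp1
    · rw [Finset.mem_singleton] at ht; subst ht; exact (hB.1 b1 h1).1 hq1
  obtain ⟨b, _, hu⟩ := hB.2 {p, q} hsub (pair_card hpq)
  have e1 := hu b1 ⟨h1, by
    intro t ht
    rcases Finset.mem_insert.mp ht with rfl | ht
    · exact hp1
    · rw [Finset.mem_singleton] at ht; subst ht; exact hq1⟩
  have e2 := hu b2 ⟨h2, by
    intro t ht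
    rcases Finset.mem_insert.mp ht with rfl | ht
    · exact hp2
    · rw [Finset.mem_singleton] at ht; subst ht; exact hq2⟩
  rw [e1, e2]

lemma clash (hB : IsSteinerSystem V B 3 2) {b1 b2 : Finset α}
    (h1 : b1 ∈ B) (h2 : b2 ∈ B) {p q r : α}
    (hp1 : p ∈ b1) (hq1 : q ∈ b1) (hp2 : p ∈ b2) (hq2 : q ∈ b2) (hpq : p ≠ q)
    (hr1 : r ∈ b1) (hr2 : r ∉ b2) : False := by
  exact hr2 (blocks_eq hB h1 h2 hp1 hq1 hp2 hq2 hpq ▸ hr1)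

lemma card3_ne {a b c : α} (h2 : ({a, b, c} : Finset α).card = 3) :
    a ≠ b ∧ a ≠ c ∧ b ≠ c := by
  refine ⟨?_, ?_, ?_⟩ <;> rintro rfl
  · rw [Finset.insert_idem] at h2
    have : ({a, c} : Finset α).card ≤ 2 :=
      le_trans (Finset.card_insert_le _ _) (by simp)
    omega
  · have hc : ({a, b, a} : Finset α) = {a, b} := by ext t; simp; try tauto
    rw [hc] at h2
    have : ({a, b} : Finset α).card ≤ 2 :=
      le_trans (Finset.card_insert_le _ _) (by simp)
    omega
  · have hc : ({a, b, b} : Finset α) = {a, b} := by ext t; simp; try tauto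
    rw [hc] at h2
    have : ({a, b} : Finset α).card ≤ 2 :=
      le_trans (Finset.card_insert_le _ _) (by simp)
    omega

lemma mem3 (hB : IsSteinerSystem V B 3 2) {a b c : α} (h : {a, b, c} ∈ B) :
    a ∈ V ∧ b ∈ V ∧ c ∈ V ∧ a ≠ b ∧ a ≠ c ∧ b ≠ c := by
  have h1 := (hB.1 _ h).1
  have h2 := (hB.1 _ h).2
  exact ⟨h1 (by simp), h1 (by simp), h1 (by simp), card3_ne h2⟩

lemma exists_third (hB : IsSteinerSystem V B 3 2) {a b : α}
    (ha : a ∈ V) (hb : b ∈ V) (hab : a ≠ b) : ∃ c, ({a, b, c} : Finset α) ∈ B := by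
  have hsub : ({a, b} : Finset α) ⊆ V := by
    intro t ht; rcases Finset.mem_insert.mp ht with rfl | ht
    · exact ha
    · rw [Finset.mem_singleton] at ht; subst ht; exact hb
  obtain ⟨t, ⟨htB, hst⟩, _⟩ := hB.2 {a, b} hsub (pair_card hab)
  have hcard := (hB.1 t htB).2
  have hdiff : (t \ {a, b}).card = 1 := by
    rw [Finset.card_sdiff_of_subset hst, hcard, pair_card hab]
  obtain ⟨c, hc⟩ := Finset.card_eq_one.mp hdiff
  have hcmem : c ∈ t \ ({a, b} : Finset α) := by rw [hc]; simp
  have hct : c ∈ t := (Finset.mem_sdiff.mp hcmem).1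
  have hcnab : c ∉ ({a, b} : Finset α) := (Finset.mem_sdiff.mp hcmem).2
  refine ⟨c, ?_⟩
  have hsub2 : ({a, b, c} : Finset α) ⊆ t := by
    intro x hx
    simp only [Finset.mem_insert, Finset.mem_singleton] at hx
    rcases hx with rfl | rfl | rfl
    · exact hst (by simp)
    · exact hst (by simp)
    · exact hct
  have hbc : b ∉ ({c} : Finset α) := by
    simp only [Finset.mem_singleton]; rintro rfl; exact hcnab (by simp)
  have habc : a ∉ ({b, c} : Finset α) := by
    simp only [Finset.mem_insert, Finset.mem_singleton]
    rintro (rfl | rfl)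
    · exact hab rfl
    · exact hcnab (by simp)
  have hcard3 : ({a, b, c} : Finset α).card = 3 := by
    rw [Finset.card_insert_of_notMem habc, Finset.card_insert_of_notMem hbc,
      Finset.card_singleton]
  have heq : ({a, b, c} : Finset α) = t :=
    Finset.eq_of_subset_of_card_le hsub2 (by omega)
  rw [heq]; exact htB

lemma third_unique (hB : IsSteinerSystem V B 3 2) {a b c d : α} (hab : a ≠ b)
    (h1 : ({a, b, c} : Finset α) ∈ B) (h2 : ({a, b, d} : Finset α) ∈ B) : c = d := by
  have he := blocks_eq hB h1 h2 (p := a) (q := b) (by simp) (by simp) (by simp) (by simp) hab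
  have hc : c ∈ ({a, b, d} : Finset α) := he ▸ (by simp : c ∈ ({a, b, c} : Finset α))
  have h3 := mem3 hB h1
  simp only [Finset.mem_insert, Finset.mem_singleton] at hc
  rcases hc with rfl | rfl | rfl
  · exact absurd rfl h3.2.2.2.2.1.symm
  · exact absurd rfl h3.2.2.2.2.2.symm
  · rfl

structure Grid (V : Finset α) (B : Finset (Finset α)) where
  x : Fin 3 → Fin 3 → α
  nd : Function.Injective fun p : Fin 3 × Fin 3 => x p.1 p.2
  mem : ∀ i j, x i j ∈ V
  surj : ∀ t ∈ V, ∃ i j, t = x i j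
  row : ∀ i, ({x i 0, x i 1, x i 2} : Finset α) ∈ B
  tr : ∀ c d : Fin 3, ({x 0 c, x 1 d, x 2 (-(c + d))} : Finset α) ∈ B

def g9 (a b c d e f g h i : α) : Fin 3 → Fin 3 → α := ![![a,b,c],![d,e,f],![g,h,i]]

section g9
variable (a b c d e f g h i : α)
@[simp] lemma g9_00 : g9 a b c d e f g h i 0 0 = a := rfl
@[simp] lemma g9_01 : g9 a b c d e f g h i 0 1 = b := rfl
@[simp] lemma g9_02 : g9 a b c d e f g h i 0 2 = c := rfl
@[simp] lemma g9_10 : g9 a b c d e f g h i 1 0 = d := rfl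
@[simp] lemma g9_11 : g9 a b c d e f g h i 1 1 = e := rfl
@[simp] lemma g9_12 : g9 a b c d e f g h i 1 2 = f := rfl
@[simp] lemma g9_20 : g9 a b c d e f g h i 2 0 = g := rfl
@[simp] lemma g9_21 : g9 a b c d e f g h i 2 1 = h := rfl
@[simp] lemma g9_22 : g9 a b c d e f g h i 2 2 = i := rfl
end g9

lemma grid_of_points (hB : IsSteinerSystem V B 3 2)
    {a b c d e f g h i : α}
    (hnd : ([a, b, c, d, e, f, g, h, i] : List α).Nodup)
    (hsurj : ∀ t ∈ V, t = a ∨ t = b ∨ t = c ∨ t = d ∨ t = e ∨ t = f ∨ t = g ∨ t = h ∨ t = i)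
    (hr0 : ({a, b, c} : Finset α) ∈ B)
    (hr1 : ({d, e, f} : Finset α) ∈ B)
    (hr2 : ({g, h, i} : Finset α) ∈ B)
    (ht1 : ({a, d, g} : Finset α) ∈ B)
    (ht2 : ({a, e, i} : Finset α) ∈ B)
    (ht3 : ({a, f, h} : Finset α) ∈ B)
    (ht4 : ({b, d, i} : Finset α) ∈ B)
    (ht5 : ({b, e, h} : Finset α) ∈ B)
    (ht6 : ({b, f, g} : Finset α) ∈ B)
    (ht7 : ({c, d, h} : Finset α) ∈ B)
    (ht8 : ({c, e, g} : Finset α) ∈ B)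
    (ht9 : ({c, f, i} : Finset α) ∈ B) :
    Nonempty (Grid V B) := by
  simp only [List.nodup_cons, List.mem_cons, List.mem_singleton, List.not_mem_nil,
    List.nodup_nil, and_true, not_or, or_false] at hnd
  obtain ⟨⟨hab, hac, had, hae, haf, hag, hah, hai⟩,
    ⟨hbc, hbd, hbe, hbf, hbg, hbh, hbi⟩,
    ⟨hcd, hce, hcf, hcg, hch, hci⟩,
    ⟨hde, hdf, hdg, hdh, hdi⟩,
    ⟨hef, heg, heh, hei⟩, ⟨hfg, hfh, hfi⟩, ⟨hgh, hgi⟩, hhi, -⟩ := hnd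
  have hma := mem3 hB hr0
  have hmd := mem3 hB hr1
  have hmg := mem3 hB hr2
  refine ⟨⟨g9 a b c d e f g h i, ?_, ?_, ?_, ?_, ?_⟩⟩
  · intro p p' hpp
    fin_cases p <;> fin_cases p' <;> (try simp at hpp) <;>
      first
        | rfl
        | exact absurd hpp (by assumption)
        | exact absurd hpp.symm (by assumption)
  · intro i' j'
    fin_cases i' <;> fin_cases j' <;> simp <;> tauto
  · intro t ht
    rcases hsurj t ht with rfl | rfl | rfl | rfl | rfl | rfl | rfl | rfl | rfl
    · exact ⟨0, 0, rfl⟩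
    · exact ⟨0, 1, rfl⟩
    · exact ⟨0, 2, rfl⟩
    · exact ⟨1, 0, rfl⟩
    · exact ⟨1, 1, rfl⟩
    · exact ⟨1, 2, rfl⟩
    · exact ⟨2, 0, rfl⟩
    · exact ⟨2, 1, rfl⟩
    · exact ⟨2, 2, rfl⟩
  · intro i'
    fin_cases i' <;> simp <;> first | exact hr0 | exact hr1 | exact hr2
  · intro c' d'
    fin_cases c' <;> fin_cases d' <;> simp <;>
      first
        | exact ht1 | exact ht2 | exact ht3 | exact ht4 | exact ht5
        | exact ht6 | exact ht7 | exact ht8 | exact ht9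

lemma grid_nonempty (hB : IsSteinerSystem V B 3 2) (h9 : V.card = 9) :
    Nonempty (Grid V B) := by
  classical
  -- two distinct points
  obtain ⟨p0, hp0V, p1, hp1V, h01⟩ := Finset.one_lt_card.mp (by omega : 1 < V.card)
  obtain ⟨p2, hL⟩ := exists_third hB hp0V hp1V h01
  obtain ⟨-, -, hp2V, -, h02, h12⟩ := mem3 hB hL
  -- a point outside L
  have hnsub : ¬ V ⊆ ({p0, p1, p2} : Finset α) := by
    intro hs
    have hc := Finset.card_le_card hs
    have : ({p0, p1, p2} : Finset α).card ≤ 3 :=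
      le_trans (Finset.card_insert_le _ _)
        (by have := Finset.card_insert_le p1 ({p2} : Finset α); simp at this ⊢; omega)
    omega
  obtain ⟨q, hqV, hqL⟩ := Finset.not_subset.mp hnsub
  simp only [Finset.mem_insert, Finset.mem_singleton, not_or] at hqL
  obtain ⟨hq0, hq1, hq2⟩ := hqL
  -- the three blocks through q meeting L
  obtain ⟨x0, hQ0⟩ := exists_third hB hqV hp0V hq0
  obtain ⟨-, -, hx0V, -, hqx0, hp0x0⟩ := mem3 hB hQ0
  obtain ⟨x1, hQ1⟩ := exists_third hB hqV hp1V hq1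
  obtain ⟨-, -, hx1V, -, hqx1, hp1x1⟩ := mem3 hB hQ1
  obtain ⟨x2, hQ2⟩ := exists_third hB hqV hp2V hq2
  obtain ⟨-, -, hx2V, -, hqx2, hp2x2⟩ := mem3 hB hQ2
  have hx0p1 : x0 ≠ p1 := by
    rintro rfl
    exact clash hB hQ0 hL (p := p0) (q := x0) (r := q) (by simp) (by simp) (by simp) (by simp)
      hp0x0 (by simp) (by simp [hq0, hq1, hq2])
  have hx0p2 : x0 ≠ p2 := by
    rintro rfl
    exact clash hB hQ0 hL (p := p0) (q := x0) (r := q) (by simp) (by simp) (by simp) (by simp)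
      hp0x0 (by simp) (by simp [hq0, hq1, hq2])
  have hx1p0 : x1 ≠ p0 := by
    rintro rfl
    exact clash hB hQ1 hL (p := p1) (q := x1) (r := q) (by simp) (by simp) (by simp) (by simp)
      hp1x1 (by simp) (by simp [hq0, hq1, hq2])
  have hx1p2 : x1 ≠ p2 := by
    rintro rfl
    exact clash hB hQ1 hL (p := p1) (q := x1) (r := q) (by simp) (by simp) (by simp) (by simp)
      hp1x1 (by simp) (by simp [hq0, hq1, hq2])
  have hx2p0 : x2 ≠ p0 := by
    rintro rfl
    exact clash hB hQ2 hL (p := p2) (q := x2) (r := q) (by simp) (by simp) (by simp) (by simp)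
      hp2x2 (by simp) (by simp [hq0, hq1, hq2])
  have hx2p1 : x2 ≠ p1 := by
    rintro rfl
    exact clash hB hQ2 hL (p := p2) (q := x2) (r := q) (by simp) (by simp) (by simp) (by simp)
      hp2x2 (by simp) (by simp [hq0, hq1, hq2])
  have hx0x1 : x0 ≠ x1 := by
    rintro rfl
    exact clash hB hQ0 hQ1 (p := q) (q := x0) (r := p0) (by simp) (by simp) (by simp) (by simp)
      hqx0 (by simp) (by simp [Ne.symm hq0, h01, hp0x0])
  have hx0x2 : x0 ≠ x2 := by
    rintro rfl
    exact clash hB hQ0 hQ2 (p := q) (q := x0) (r := p0) (by simp) (by simp) (by simp) (by simp)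
      hqx0 (by simp) (by simp [Ne.symm hq0, h02, hp0x0])
  have hx1x2 : x1 ≠ x2 := by
    rintro rfl
    exact clash hB hQ1 hQ2 (p := q) (q := x1) (r := p1) (by simp) (by simp) (by simp) (by simp)
      hqx1 (by simp) (by simp [Ne.symm hq1, h12, hp1x1])
  -- the remaining two points u, v
  have hsub7 : ({p0, p1, p2, q, x0, x1, x2} : Finset α) ⊆ V := by
    intro z hz
    simp only [Finset.mem_insert, Finset.mem_singleton] at hz
    rcases hz with rfl | rfl | rfl | rfl | rfl | rfl | rfl <;> assumption
  have hcard7 : ({p0, p1, p2, q, x0, x1, x2} : Finset α).card = 7 := by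
    rw [Finset.card_insert_of_notMem (by
        simp [h01, h02, Ne.symm hq0, hp0x0, Ne.symm hx1p0, Ne.symm hx2p0]),
      Finset.card_insert_of_notMem (by
        simp [h12, Ne.symm hq1, Ne.symm hx0p1, hp1x1, Ne.symm hx2p1]),
      Finset.card_insert_of_notMem (by
        simp [Ne.symm hq2, Ne.symm hx0p2, Ne.symm hx1p2, hp2x2]),
      Finset.card_insert_of_notMem (by simp [hqx0, hqx1, hqx2]),
      Finset.card_insert_of_notMem (by simp [hx0x1, hx0x2]),
      Finset.card_insert_of_notMem (by simp [hx1x2]),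
      Finset.card_singleton]
  have hTcard : (V \ ({p0, p1, p2, q, x0, x1, x2} : Finset α)).card = 2 := by
    rw [Finset.card_sdiff_of_subset hsub7, hcard7, h9]
  obtain ⟨u, v, huv, hT⟩ := Finset.card_eq_two.mp hTcard
  have huT : u ∈ V \ ({p0, p1, p2, q, x0, x1, x2} : Finset α) := by rw [hT]; simp
  have hvT : v ∈ V \ ({p0, p1, p2, q, x0, x1, x2} : Finset α) := by rw [hT]; simp
  have huV : u ∈ V := (Finset.mem_sdiff.mp huT).1
  have hvV : v ∈ V := (Finset.mem_sdiff.mp hvT).1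
  have hu7 := (Finset.mem_sdiff.mp huT).2
  have hv7 := (Finset.mem_sdiff.mp hvT).2
  simp only [Finset.mem_insert, Finset.mem_singleton, not_or] at hu7 hv7
  obtain ⟨hup0, hup1, hup2, huq, hux0, hux1, hux2⟩ := hu7
  obtain ⟨hvp0, hvp1, hvp2, hvq, hvx0, hvx1, hvx2⟩ := hv7
  have hV9 : ∀ t ∈ V, t = p0 ∨ t = p1 ∨ t = p2 ∨ t = q ∨ t = u ∨ t = v ∨
      t = x0 ∨ t = x1 ∨ t = x2 := by
    intro t ht
    by_cases h7 : t ∈ ({p0, p1, p2, q, x0, x1, x2} : Finset α)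
    · simp only [Finset.mem_insert, Finset.mem_singleton] at h7
      rcases h7 with rfl | rfl | rfl | rfl | rfl | rfl | rfl <;> simp
    · have : t ∈ V \ ({p0, p1, p2, q, x0, x1, x2} : Finset α) := Finset.mem_sdiff.mpr ⟨ht, h7⟩
      rw [hT] at this
      simp only [Finset.mem_insert, Finset.mem_singleton] at this
      rcases this with rfl | rfl <;> simp
  have hM : ({q, u, v} : Finset α) ∈ B := by
    obtain ⟨t, htb⟩ := exists_third hB hqV huV (Ne.symm huq)
    obtain ⟨-, -, htV, hqu, hqt, hut⟩ := mem3 hB htb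
    have ht_p0 : t ≠ p0 := by
      rintro rfl
      exact clash hB htb hQ0 (p := q) (q := t) (r := u) (by simp) (by simp) (by simp)
        (by simp) hqt (by simp) (by simp [huq, hup0, hux0])
    have ht_p1 : t ≠ p1 := by
      rintro rfl
      exact clash hB htb hQ1 (p := q) (q := t) (r := u) (by simp) (by simp) (by simp)
        (by simp) hqt (by simp) (by simp [huq, hup1, hux1])
    have ht_p2 : t ≠ p2 := by
      rintro rfl
      exact clash hB htb hQ2 (p := q) (q := t) (r := u) (by simp) (by simp) (by simp)
        (by simp) hqt (by simp) (by simp [huq, hup2, hux2])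
    have ht_x0 : t ≠ x0 := by
      rintro rfl
      exact clash hB htb hQ0 (p := q) (q := t) (r := u) (by simp) (by simp) (by simp)
        (by simp) hqt (by simp) (by simp [huq, hup0, hux0])
    have ht_x1 : t ≠ x1 := by
      rintro rfl
      exact clash hB htb hQ1 (p := q) (q := t) (r := u) (by simp) (by simp) (by simp)
        (by simp) hqt (by simp) (by simp [huq, hup1, hux1])
    have ht_x2 : t ≠ x2 := by
      rintro rfl
      exact clash hB htb hQ2 (p := q) (q := t) (r := u) (by simp) (by simp) (by simp)
        (by simp) hqt (by simp) (by simp [huq, hup2, hux2])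
    have htv : t = v := by
      rcases hV9 t htV with rfl | rfl | rfl | rfl | rfl | rfl | rfl | rfl | rfl <;>
        first | rfl | exact absurd rfl (by assumption)
    rw [htv] at htb
    exact htb
  have hN : ({x0, x1, x2} : Finset α) ∈ B := by
    obtain ⟨t, htb⟩ := exists_third hB hx0V hx1V hx0x1
    obtain ⟨-, -, htV, -, hx0t, hx1t⟩ := mem3 hB htb
    have ht_q : t ≠ q := by
      rintro rfl
      exact clash hB htb hQ0 (p := x0) (q := t) (r := x1) (by simp) (by simp) (by simp)
        (by simp) hx0t (by simp) (by simp [hx1t, hx1p0, Ne.symm hx0x1])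
    have ht_p0 : t ≠ p0 := by
      rintro rfl
      exact clash hB htb hQ0 (p := x0) (q := t) (r := x1) (by simp) (by simp) (by simp)
        (by simp) hx0t (by simp) (by simp [Ne.symm hqx1, hx1p0, Ne.symm hx0x1])
    have ht_p1 : t ≠ p1 := by
      rintro rfl
      exact clash hB htb hQ1 (p := x1) (q := t) (r := x0) (by simp) (by simp) (by simp)
        (by simp) hx1t (by simp) (by simp [Ne.symm hqx0, hx0p1, hx0x1])
    have ht_u : t ≠ u := by
      rintro rfl
      obtain ⟨s0, hs0B⟩ := exists_third hB huV hp0V hup0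
      obtain ⟨-, -, hs0V, -, hts0, hp0s0⟩ := mem3 hB hs0B
      have hs0p1 : s0 ≠ p1 := by
        rintro rfl
        exact clash hB hs0B hL (p := p0) (q := s0) (r := t) (by simp) (by simp) (by simp)
          (by simp) hp0s0 (by simp) (by simp [hup0, hup1, hup2])
      have hs0p2 : s0 ≠ p2 := by
        rintro rfl
        exact clash hB hs0B hL (p := p0) (q := s0) (r := t) (by simp) (by simp) (by simp)
          (by simp) hp0s0 (by simp) (by simp [hup0, hup1, hup2])
      have hs0q : s0 ≠ q := by
        rintro rfl
        exact clash hB hs0B hQ0 (p := p0) (q := s0) (r := t) (by simp) (by simp) (by simp)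
          (by simp) hp0s0 (by simp) (by simp [huq, hup0, hux0])
      have hs0v : s0 ≠ v := by
        rintro rfl
        exact clash hB hs0B hM (p := t) (q := s0) (r := p0) (by simp) (by simp) (by simp)
          (by simp) hts0 (by simp) (by simp [Ne.symm hq0, Ne.symm hup0, hp0s0])
      have hs0x0 : s0 ≠ x0 := by
        rintro rfl
        exact clash hB hs0B hQ0 (p := p0) (q := s0) (r := t) (by simp) (by simp) (by simp)
          (by simp) hp0s0 (by simp) (by simp [huq, hup0, hux0])
      have hs0x1 : s0 ≠ x1 := by
        rintro rfl
        exact clash hB hs0B htb (p := t) (q := s0) (r := p0) (by simp) (by simp) (by simp)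
          (by simp) hts0 (by simp) (by simp [hp0x0, hp0s0, Ne.symm hup0])
      have hs0x2 : s0 = x2 := by
        rcases hV9 s0 hs0V with rfl | rfl | rfl | rfl | rfl | rfl | rfl | rfl | rfl <;>
          first | rfl | exact absurd rfl (by assumption)
      rw [hs0x2] at hs0B hts0
      obtain ⟨s1, hs1B⟩ := exists_third hB huV hp1V hup1
      obtain ⟨-, -, hs1V, -, hts1, hp1s1⟩ := mem3 hB hs1B
      have hs1p0 : s1 ≠ p0 := by
        rintro rfl
        exact clash hB hs1B hL (p := p1) (q := s1) (r := t) (by simp) (by simp) (by simp)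
          (by simp) hp1s1 (by simp) (by simp [hup0, hup1, hup2])
      have hs1p2 : s1 ≠ p2 := by
        rintro rfl
        exact clash hB hs1B hL (p := p1) (q := s1) (r := t) (by simp) (by simp) (by simp)
          (by simp) hp1s1 (by simp) (by simp [hup0, hup1, hup2])
      have hs1q : s1 ≠ q := by
        rintro rfl
        exact clash hB hs1B hQ1 (p := p1) (q := s1) (r := t) (by simp) (by simp) (by simp)
          (by simp) hp1s1 (by simp) (by simp [huq, hup1, hux1])
      have hs1v : s1 ≠ v := by
        rintro rfl
        exact clash hB hs1B hM (p := t) (q := s1) (r := p1) (by simp) (by simp) (by simp)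
          (by simp) hts1 (by simp) (by simp [Ne.symm hq1, Ne.symm hup1, hp1s1])
      have hs1x0 : s1 ≠ x0 := by
        rintro rfl
        exact clash hB hs1B htb (p := t) (q := s1) (r := p1) (by simp) (by simp) (by simp)
          (by simp) hts1 (by simp) (by simp [hp1s1, hp1x1, Ne.symm hup1])
      have hs1x1 : s1 ≠ x1 := by
        rintro rfl
        exact clash hB hs1B hQ1 (p := p1) (q := s1) (r := t) (by simp) (by simp) (by simp)
          (by simp) hp1s1 (by simp) (by simp [huq, hup1, hux1])
      have hs1x2 : s1 = x2 := by
        rcases hV9 s1 hs1V with rfl | rfl | rfl | rfl | rfl | rfl | rfl | rfl | rfl <;>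
          first | rfl | exact absurd rfl (by assumption)
      rw [hs1x2] at hs1B
      exact clash hB hs0B hs1B (p := t) (q := x2) (r := p0) (by simp) (by simp) (by simp)
        (by simp) hts0 (by simp) (by simp [Ne.symm hup0, h01, Ne.symm hx2p0])
    have ht_v : t ≠ v := by
      rintro rfl
      obtain ⟨s0, hs0B⟩ := exists_third hB hvV hp0V hvp0
      obtain ⟨-, -, hs0V, -, hts0, hp0s0⟩ := mem3 hB hs0B
      have hs0p1 : s0 ≠ p1 := by
        rintro rfl
        exact clash hB hs0B hL (p := p0) (q := s0) (r := t) (by simp) (by simp) (by simp)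
          (by simp) hp0s0 (by simp) (by simp [hvp0, hvp1, hvp2])
      have hs0p2 : s0 ≠ p2 := by
        rintro rfl
        exact clash hB hs0B hL (p := p0) (q := s0) (r := t) (by simp) (by simp) (by simp)
          (by simp) hp0s0 (by simp) (by simp [hvp0, hvp1, hvp2])
      have hs0q : s0 ≠ q := by
        rintro rfl
        exact clash hB hs0B hQ0 (p := p0) (q := s0) (r := t) (by simp) (by simp) (by simp)
          (by simp) hp0s0 (by simp) (by simp [hvq, hvp0, hvx0])
      have hs0u : s0 ≠ u := by
        rintro rfl
        exact clash hB hs0B hM (p := t) (q := s0) (r := p0) (by simp) (by simp) (by simp)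
          (by simp) hts0 (by simp) (by simp [Ne.symm hq0, Ne.symm hvp0, hp0s0])
      have hs0x0 : s0 ≠ x0 := by
        rintro rfl
        exact clash hB hs0B hQ0 (p := p0) (q := s0) (r := t) (by simp) (by simp) (by simp)
          (by simp) hp0s0 (by simp) (by simp [hvq, hvp0, hvx0])
      have hs0x1 : s0 ≠ x1 := by
        rintro rfl
        exact clash hB hs0B htb (p := t) (q := s0) (r := p0) (by simp) (by simp) (by simp)
          (by simp) hts0 (by simp) (by simp [hp0x0, hp0s0, Ne.symm hvp0])
      have hs0x2 : s0 = x2 := by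
        rcases hV9 s0 hs0V with rfl | rfl | rfl | rfl | rfl | rfl | rfl | rfl | rfl <;>
          first | rfl | exact absurd rfl (by assumption)
      rw [hs0x2] at hs0B hts0
      obtain ⟨s1, hs1B⟩ := exists_third hB hvV hp1V hvp1
      obtain ⟨-, -, hs1V, -, hts1, hp1s1⟩ := mem3 hB hs1B
      have hs1p0 : s1 ≠ p0 := by
        rintro rfl
        exact clash hB hs1B hL (p := p1) (q := s1) (r := t) (by simp) (by simp) (by simp)
          (by simp) hp1s1 (by simp) (by simp [hvp0, hvp1, hvp2])
      have hs1p2 : s1 ≠ p2 := by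
        rintro rfl
        exact clash hB hs1B hL (p := p1) (q := s1) (r := t) (by simp) (by simp) (by simp)
          (by simp) hp1s1 (by simp) (by simp [hvp0, hvp1, hvp2])
      have hs1q : s1 ≠ q := by
        rintro rfl
        exact clash hB hs1B hQ1 (p := p1) (q := s1) (r := t) (by simp) (by simp) (by simp)
          (by simp) hp1s1 (by simp) (by simp [hvq, hvp1, hvx1])
      have hs1u : s1 ≠ u := by
        rintro rfl
        exact clash hB hs1B hM (p := t) (q := s1) (r := p1) (by simp) (by simp) (by simp)
          (by simp) hts1 (by simp) (by simp [Ne.symm hq1, Ne.symm hvp1, hp1s1])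
      have hs1x0 : s1 ≠ x0 := by
        rintro rfl
        exact clash hB hs1B htb (p := t) (q := s1) (r := p1) (by simp) (by simp) (by simp)
          (by simp) hts1 (by simp) (by simp [hp1s1, hp1x1, Ne.symm hvp1])
      have hs1x1 : s1 ≠ x1 := by
        rintro rfl
        exact clash hB hs1B hQ1 (p := p1) (q := s1) (r := t) (by simp) (by simp) (by simp)
          (by simp) hp1s1 (by simp) (by simp [hvq, hvp1, hvx1])
      have hs1x2 : s1 = x2 := by
        rcases hV9 s1 hs1V with rfl | rfl | rfl | rfl | rfl | rfl | rfl | rfl | rfl <;>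
          first | rfl | exact absurd rfl (by assumption)
      rw [hs1x2] at hs1B
      exact clash hB hs0B hs1B (p := t) (q := x2) (r := p0) (by simp) (by simp) (by simp)
        (by simp) hts0 (by simp) (by simp [Ne.symm hvp0, h01, Ne.symm hx2p0])
    have ht_p2 : t ≠ p2 := by
      rintro rfl
      obtain ⟨s, hsB⟩ := exists_third hB hp2V huV (Ne.symm hup2)
      obtain ⟨-, -, hsV, -, hts, hus⟩ := mem3 hB hsB
      have hs_p0 : s ≠ p0 := by
        rintro rfl
        exact clash hB hsB hL (p := t) (q := s) (r := u) (by simp) (by simp) (by simp)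
          (by simp) hts (by simp) (by simp [hup0, hup1, hup2])
      have hs_p1 : s ≠ p1 := by
        rintro rfl
        exact clash hB hsB hL (p := t) (q := s) (r := u) (by simp) (by simp) (by simp)
          (by simp) hts (by simp) (by simp [hup0, hup1, hup2])
      have hs_q : s ≠ q := by
        rintro rfl
        exact clash hB hsB hQ2 (p := t) (q := s) (r := u) (by simp) (by simp) (by simp)
          (by simp) hts (by simp) (by simp [huq, hup2, hux2])
      have hs_x2 : s ≠ x2 := by
        rintro rfl
        exact clash hB hsB hQ2 (p := t) (q := s) (r := u) (by simp) (by simp) (by simp)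
          (by simp) hts (by simp) (by simp [huq, hup2, hux2])
      have hs_x0 : s ≠ x0 := by
        rintro rfl
        exact clash hB hsB htb (p := t) (q := s) (r := u) (by simp) (by simp) (by simp)
          (by simp) hts (by simp) (by simp [hux0, hux1, hup2])
      have hs_x1 : s ≠ x1 := by
        rintro rfl
        exact clash hB hsB htb (p := t) (q := s) (r := u) (by simp) (by simp) (by simp)
          (by simp) hts (by simp) (by simp [hux0, hux1, hup2])
      have hs_v : s = v := by
        rcases hV9 s hsV with rfl | rfl | rfl | rfl | rfl | rfl | rfl | rfl | rfl <;>
          first | rfl | exact absurd rfl (by assumption)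
      rw [hs_v] at hsB
      exact clash hB hsB hM (p := u) (q := v) (r := t) (by simp) (by simp) (by simp)
        (by simp) huv (by simp) (by simp [Ne.symm hq2, Ne.symm hup2, Ne.symm hvp2])
    have htx2 : t = x2 := by
      rcases hV9 t htV with rfl | rfl | rfl | rfl | rfl | rfl | rfl | rfl | rfl <;>
        first | rfl | exact absurd rfl (by assumption)
    rw [htx2] at htb
    exact htb
  have hnotL : ∀ z, (z = q ∨ z = u ∨ z = v) → z ∉ ({p0, p1, p2} : Finset α) := by
    rintro z (rfl | rfl | rfl) <;>
      simp [hq0, hq1, hq2, hup0, hup1, hup2, hvp0, hvp1, hvp2]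
  have hnotM : ∀ z, (z = p0 ∨ z = p1 ∨ z = p2) → z ∉ ({q, u, v} : Finset α) := by
    rintro z (rfl | rfl | rfl) <;>
      simp [Ne.symm hq0, Ne.symm hq1, Ne.symm hq2, Ne.symm hup0, Ne.symm hup1, Ne.symm hup2,
        Ne.symm hvp0, Ne.symm hvp1, Ne.symm hvp2]
  have crossN : ∀ a' m' t', (a' = p0 ∨ a' = p1 ∨ a' = p2) → (m' = u ∨ m' = v) →
      ({a', m', t'} : Finset α) ∈ B → t' = x0 ∨ t' = x1 ∨ t' = x2 := by
    intro a' m' t' ha hm hmem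
    have h3 := mem3 hB hmem
    have ha'L : a' ∈ ({p0, p1, p2} : Finset α) := by rcases ha with rfl | rfl | rfl <;> simp
    have hm'M : m' ∈ ({q, u, v} : Finset α) := by rcases hm with rfl | rfl <;> simp
    have htL : t' ∉ ({p0, p1, p2} : Finset α) := fun htL =>
      clash hB hmem hL (p := a') (q := t') (r := m') (by simp) (by simp) ha'L htL
        h3.2.2.2.2.1 (by simp) (hnotL m' (Or.inr hm))
    have htM : t' ∉ ({q, u, v} : Finset α) := fun htM =>
      clash hB hmem hM (p := m') (q := t') (r := a') (by simp) (by simp) hm'M htM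
        h3.2.2.2.2.2 (by simp) (hnotM a' ha)
    simp only [Finset.mem_insert, Finset.mem_singleton, not_or] at htL htM
    obtain ⟨c1, c2, c3⟩ := htL
    obtain ⟨c4, c5, c6⟩ := htM
    rcases hV9 t' h3.2.2.1 with rfl | rfl | rfl | rfl | rfl | rfl | rfl | rfl | rfl <;>
      first
        | (exact Or.inl rfl) | (exact Or.inr (Or.inl rfl)) | (exact Or.inr (Or.inr rfl))
        | exact absurd rfl c1 | exact absurd rfl c2 | exact absurd rfl c3
        | exact absurd rfl c4 | exact absurd rfl c5 | exact absurd rfl c6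
  obtain ⟨su, hsuB⟩ := exists_third hB hp1V huV (Ne.symm hup1)
  obtain ⟨-, -, -, -, hp1su, husu⟩ := mem3 hB hsuB
  have hsuN := crossN p1 u su (Or.inr (Or.inl rfl)) (Or.inl rfl) hsuB
  have hsux1 : su ≠ x1 := by
    rintro rfl
    exact clash hB hsuB hQ1 (p := p1) (q := su) (r := u) (by simp) (by simp) (by simp)
      (by simp) hp1su (by simp) (by simp [huq, hup1, hux1])
  obtain ⟨sv, hsvB⟩ := exists_third hB hp1V hvV (Ne.symm hvp1)
  obtain ⟨-, -, -, -, hp1sv, hvsv⟩ := mem3 hB hsvB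
  have hsvN := crossN p1 v sv (Or.inr (Or.inl rfl)) (Or.inr rfl) hsvB
  have hsvx1 : sv ≠ x1 := by
    rintro rfl
    exact clash hB hsvB hQ1 (p := p1) (q := sv) (r := v) (by simp) (by simp) (by simp)
      (by simp) hp1sv (by simp) (by simp [hvq, hvp1, hvx1])
  have hsusv : su ≠ sv := by
    rintro rfl
    exact clash hB hsuB hsvB (p := p1) (q := su) (r := u) (by simp) (by simp) (by simp)
      (by simp) hp1su (by simp) (by simp [hup1, huv, husu])
  have key : ∃ e' f', (e' = u ∨ e' = v) ∧ (f' = u ∨ f' = v) ∧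
      ({p1, e', x2} : Finset α) ∈ B ∧ ({p1, f', x0} : Finset α) ∈ B := by
    rcases hsuN with h | h | h
    · rcases hsvN with h' | h' | h'
      · exact absurd (h.trans h'.symm) hsusv
      · exact absurd h' hsvx1
      · exact ⟨v, u, Or.inr rfl, Or.inl rfl, h' ▸ hsvB, h ▸ hsuB⟩
    · exact absurd h hsux1
    · rcases hsvN with h' | h' | h'
      · exact ⟨u, v, Or.inl rfl, Or.inr rfl, h ▸ hsuB, h' ▸ hsvB⟩
      · exact absurd h' hsvx1
      · exact absurd (h.trans h'.symm) hsusv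
  obtain ⟨e', f', he', hf', hA, hA'⟩ := key
  have he'V : e' ∈ V := by rcases he' with rfl | rfl <;> assumption
  have hf'V : f' ∈ V := by rcases hf' with rfl | rfl <;> assumption
  obtain ⟨hep0, hep1, hep2, heq, hex0, hex1, hex2⟩ :
      e' ≠ p0 ∧ e' ≠ p1 ∧ e' ≠ p2 ∧ e' ≠ q ∧ e' ≠ x0 ∧ e' ≠ x1 ∧ e' ≠ x2 := by
    rcases he' with rfl | rfl
    · exact ⟨hup0, hup1, hup2, huq, hux0, hux1, hux2⟩
    · exact ⟨hvp0, hvp1, hvp2, hvq, hvx0, hvx1, hvx2⟩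
  obtain ⟨hfp0, hfp1, hfp2, hfq, hfx0, hfx1, hfx2⟩ :
      f' ≠ p0 ∧ f' ≠ p1 ∧ f' ≠ p2 ∧ f' ≠ q ∧ f' ≠ x0 ∧ f' ≠ x1 ∧ f' ≠ x2 := by
    rcases hf' with rfl | rfl
    · exact ⟨hup0, hup1, hup2, huq, hux0, hux1, hux2⟩
    · exact ⟨hvp0, hvp1, hvp2, hvq, hvx0, hvx1, hvx2⟩
  have hef : e' ≠ f' := by
    intro h
    exact clash hB hA hA' (p := p1) (q := e') (r := x2) (by simp) (by simp) (by simp)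
      (by simp [h]) (Ne.symm hep1) (by simp)
      (by simp [hx2p1, Ne.symm hfx2, Ne.symm hx0x2])
  have h0011 : ({p0, e', x1} : Finset α) ∈ B := by
    obtain ⟨t, htB⟩ := exists_third hB hp0V he'V (Ne.symm hep0)
    obtain ⟨-, -, -, -, hp0t, het⟩ := mem3 hB htB
    have hN3 := crossN p0 e' t (Or.inl rfl) he' htB
    have htx0 : t ≠ x0 := by
      rintro rfl
      exact clash hB htB hQ0 (p := p0) (q := t) (r := e') (by simp) (by simp) (by simp)
        (by simp) hp0t (by simp) (by simp [heq, hep0, hex0])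
    have htx2 : t ≠ x2 := by
      rintro rfl
      exact clash hB htB hA (p := e') (q := t) (r := p0) (by simp) (by simp) (by simp)
        (by simp) het (by simp) (by simp [h01, Ne.symm hep0, Ne.symm hx2p0])
    rcases hN3 with h | h | h
    · exact absurd h htx0
    · exact h ▸ htB
    · exact absurd h htx2
  have h0012 : ({p0, f', x2} : Finset α) ∈ B := by
    obtain ⟨t, htB⟩ := exists_third hB hp0V hf'V (Ne.symm hfp0)
    obtain ⟨-, -, -, -, hp0t, hft⟩ := mem3 hB htB
    have hN3 := crossN p0 f' t (Or.inl rfl) hf' htB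
    have htx0 : t ≠ x0 := by
      rintro rfl
      exact clash hB htB hQ0 (p := p0) (q := t) (r := f') (by simp) (by simp) (by simp)
        (by simp) hp0t (by simp) (by simp [hfq, hfp0, hfx0])
    have htx1 : t ≠ x1 := by
      rintro rfl
      exact clash hB htB h0011 (p := p0) (q := t) (r := f') (by simp) (by simp) (by simp)
        (by simp) hp0t (by simp) (by simp [hfp0, Ne.symm hef, hfx1])
    rcases hN3 with h | h | h
    · exact absurd h htx0
    · exact absurd h htx1
    · exact h ▸ htB
  have h0211 : ({p2, e', x0} : Finset α) ∈ B := by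
    obtain ⟨t, htB⟩ := exists_third hB hp2V he'V (Ne.symm hep2)
    obtain ⟨-, -, -, -, hp2t, het⟩ := mem3 hB htB
    have hN3 := crossN p2 e' t (Or.inr (Or.inr rfl)) he' htB
    have htx2 : t ≠ x2 := by
      rintro rfl
      exact clash hB htB hQ2 (p := p2) (q := t) (r := e') (by simp) (by simp) (by simp)
        (by simp) hp2t (by simp) (by simp [heq, hep2, hex2])
    have htx1 : t ≠ x1 := by
      rintro rfl
      exact clash hB htB h0011 (p := e') (q := t) (r := p2) (by simp) (by simp) (by simp)
        (by simp) het (by simp) (by simp [Ne.symm h02, Ne.symm hep2, Ne.symm hx1p2])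
    rcases hN3 with h | h | h
    · exact h ▸ htB
    · exact absurd h htx1
    · exact absurd h htx2
  have h0212 : ({p2, f', x1} : Finset α) ∈ B := by
    obtain ⟨t, htB⟩ := exists_third hB hp2V hf'V (Ne.symm hfp2)
    obtain ⟨-, -, -, -, hp2t, hft⟩ := mem3 hB htB
    have hN3 := crossN p2 f' t (Or.inr (Or.inr rfl)) hf' htB
    have htx2 : t ≠ x2 := by
      rintro rfl
      exact clash hB htB hQ2 (p := p2) (q := t) (r := f') (by simp) (by simp) (by simp)
        (by simp) hp2t (by simp) (by simp [hfq, hfp2, hfx2])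
    have htx0 : t ≠ x0 := by
      rintro rfl
      exact clash hB htB hA' (p := f') (q := t) (r := p2) (by simp) (by simp) (by simp)
        (by simp) hft (by simp) (by simp [Ne.symm h12, Ne.symm hfp2, Ne.symm hx0p2])
    rcases hN3 with h | h | h
    · exact absurd h htx0
    · exact h ▸ htB
    · exact absurd h htx2
  have hrow1 : ({q, e', f'} : Finset α) ∈ B := by
    rcases he' with rfl | rfl <;> rcases hf' with rfl | rfl
    · exact absurd rfl hef
    · exact hM
    · rw [swap23]; exact hM
    · exact absurd rfl hef
  have hrow2 : ({x0, x2, x1} : Finset α) ∈ B := by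
    rw [swap23]; exact hN
  have ht1 : ({p0, q, x0} : Finset α) ∈ B := by
    rw [swap12]; exact hQ0
  have ht4 : ({p1, q, x1} : Finset α) ∈ B := by
    rw [swap12]; exact hQ1
  have ht7 : ({p2, q, x2} : Finset α) ∈ B := by
    rw [swap12]; exact hQ2
  have hnd : ([p0, p1, p2, q, e', f', x0, x2, x1] : List α).Nodup := by
    refine List.nodup_cons.mpr ⟨?_, List.nodup_cons.mpr ⟨?_, List.nodup_cons.mpr ⟨?_,
      List.nodup_cons.mpr ⟨?_, List.nodup_cons.mpr ⟨?_, List.nodup_cons.mpr ⟨?_,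
      List.nodup_cons.mpr ⟨?_, List.nodup_cons.mpr ⟨?_, List.nodup_singleton _⟩⟩⟩⟩⟩⟩⟩⟩
    · simp [h01, h02, Ne.symm hq0, Ne.symm hep0, Ne.symm hfp0, hp0x0, Ne.symm hx2p0,
        Ne.symm hx1p0]
    · simp [h12, Ne.symm hq1, Ne.symm hep1, Ne.symm hfp1, Ne.symm hx0p1, Ne.symm hx2p1, hp1x1]
    · simp [Ne.symm hq2, Ne.symm hep2, Ne.symm hfp2, Ne.symm hx0p2, hp2x2, Ne.symm hx1p2]
    · simp [Ne.symm heq, Ne.symm hfq, hqx0, hqx2, hqx1]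
    · simp [hef, hex0, hex2, hex1]
    · simp [hfx0, hfx2, hfx1]
    · simp [hx0x2, hx0x1]
    · simp [Ne.symm hx1x2]
  have hu_ef : u = e' ∨ u = f' := by
    rcases he' with rfl | rfl
    · exact Or.inl rfl
    · rcases hf' with rfl | rfl
      · exact Or.inr rfl
      · exact absurd rfl hef
  have hv_ef : v = e' ∨ v = f' := by
    rcases he' with rfl | rfl
    · rcases hf' with rfl | rfl
      · exact absurd rfl hef
      · exact Or.inr rfl
    · exact Or.inl rfl
  have hsurj : ∀ t ∈ V, t = p0 ∨ t = p1 ∨ t = p2 ∨ t = q ∨ t = e' ∨ t = f' ∨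
      t = x0 ∨ t = x2 ∨ t = x1 := by
    intro t ht
    rcases hV9 t ht with rfl | rfl | rfl | rfl | rfl | rfl | rfl | rfl | rfl
    · exact Or.inl rfl
    · exact Or.inr (Or.inl rfl)
    · exact Or.inr (Or.inr (Or.inl rfl))
    · exact Or.inr (Or.inr (Or.inr (Or.inl rfl)))
    · rcases hu_ef with h | h
      · exact Or.inr (Or.inr (Or.inr (Or.inr (Or.inl h))))
      · exact Or.inr (Or.inr (Or.inr (Or.inr (Or.inr (Or.inl h)))))
    · rcases hv_ef with h | h
      · exact Or.inr (Or.inr (Or.inr (Or.inr (Or.inl h))))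
      · exact Or.inr (Or.inr (Or.inr (Or.inr (Or.inr (Or.inl h)))))
    · exact Or.inr (Or.inr (Or.inr (Or.inr (Or.inr (Or.inr (Or.inl rfl))))))
    · exact Or.inr (Or.inr (Or.inr (Or.inr (Or.inr (Or.inr (Or.inr (Or.inr rfl)))))))
    · exact Or.inr (Or.inr (Or.inr (Or.inr (Or.inr (Or.inr (Or.inr (Or.inl rfl)))))))
  exact grid_of_points hB hnd hsurj hL hrow1 hrow2 ht1 h0011 h0012 ht4 hA hA' ht7 h0211 h0212


lemma grid_block_iff (hB : IsSteinerSystem V B 3 2) (G : Grid V B) {b : Finset α}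
    (hbV : b ⊆ V) :
    b ∈ B ↔ ((∃ i, b = {G.x i 0, G.x i 1, G.x i 2}) ∨
      (∃ c d : Fin 3, b = {G.x 0 c, G.x 1 d, G.x 2 (-(c + d))})) := by
  have hne : ∀ (i j i' j' : Fin 3), (i, j) ≠ (i', j') → G.x i j ≠ G.x i' j' := by
    intro i j i' j' h heq
    exact h (G.nd (a₁ := (i, j)) (a₂ := (i', j')) heq)
  have hrowcase : ∀ bb, bb ∈ B → ∀ (i j j' : Fin 3), G.x i j ∈ bb → G.x i j' ∈ bb →
      G.x i j ≠ G.x i j' → ∃ i', bb = {G.x i' 0, G.x i' 1, G.x i' 2} := by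
    intro bb hbb i j j' h1 h2 hne'
    refine ⟨i, blocks_eq hB hbb (G.row i) h1 h2 ?_ ?_ hne'⟩
    · fin_cases j <;> simp
    · fin_cases j' <;> simp
  have htrcase : ∀ bb, bb ∈ B → ∀ (c d : Fin 3), G.x 0 c ∈ bb → G.x 1 d ∈ bb →
      bb = {G.x 0 c, G.x 1 d, G.x 2 (-(c + d))} := by
    intro bb hbb c d h1 h2
    exact blocks_eq hB hbb (G.tr c d) h1 h2 (by simp) (by simp)
      (hne 0 c 1 d (by simp [Prod.ext_iff]))
  constructor
  · intro hb
    obtain ⟨s, t, w, hst, hsw, htw, hbeq⟩ := Finset.card_eq_three.mp (hB.1 b hb).2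
    subst hbeq
    obtain ⟨is, js, hs⟩ := G.surj s (hbV (by simp))
    obtain ⟨it, jt, ht⟩ := G.surj t (hbV (by simp))
    obtain ⟨iw, jw, hw⟩ := G.surj w (hbV (by simp))
    subst hs; subst ht; subst hw
    have m1 : G.x is js ∈ ({G.x is js, G.x it jt, G.x iw jw} : Finset α) := by simp
    have m2 : G.x it jt ∈ ({G.x is js, G.x it jt, G.x iw jw} : Finset α) := by simp
    have m3 : G.x iw jw ∈ ({G.x is js, G.x it jt, G.x iw jw} : Finset α) := by simp
    fin_cases is <;> fin_cases it <;> fin_cases iw <;>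
      first
        | exact Or.inl (hrowcase _ hb _ _ _ m1 m2 hst)
        | exact Or.inl (hrowcase _ hb _ _ _ m1 m3 hsw)
        | exact Or.inl (hrowcase _ hb _ _ _ m2 m3 htw)
        | exact Or.inr ⟨_, _, htrcase _ hb _ _ m1 m2⟩
        | exact Or.inr ⟨_, _, htrcase _ hb _ _ m2 m1⟩
        | exact Or.inr ⟨_, _, htrcase _ hb _ _ m1 m3⟩
        | exact Or.inr ⟨_, _, htrcase _ hb _ _ m3 m1⟩
        | exact Or.inr ⟨_, _, htrcase _ hb _ _ m2 m3⟩
        | exact Or.inr ⟨_, _, htrcase _ hb _ _ m3 m2⟩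
  · rintro (⟨i, rfl⟩ | ⟨c, d, rfl⟩)
    · exact G.row i
    · exact G.tr c d

end STS9Aux


open STS9Aux in
/-- Any two Steiner triple systems on the same `9`-element set are isomorphic
(the affine plane `AG(2,3)` is the unique `STS(9)` up to isomorphism). -/
theorem sts9_unique {α : Type*} [DecidableEq α]
    (V : Finset α) (B₁ B₂ : Finset (Finset α)) (h : V.card = 9)
    (hB₁ : IsSteinerSystem V B₁ 3 2) (hB₂ : IsSteinerSystem V B₂ 3 2) :
    ∃ f : α → α, IsSTSIso V B₁ V B₂ f := by
  classical
  obtain ⟨G1⟩ := grid_nonempty hB₁ h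
  obtain ⟨G2⟩ := grid_nonempty hB₂ h
  have hNE : Nonempty α := ⟨G1.x 0 0⟩
  set e1 : Fin 3 × Fin 3 → α := fun p => G1.x p.1 p.2 with he1
  set f : α → α := fun t => G2.x (Function.invFun e1 t).1 (Function.invFun e1 t).2 with hf
  have hfe : ∀ i j, f (G1.x i j) = G2.x i j := by
    intro i j
    have hli : Function.invFun e1 (e1 (i, j)) = (i, j) :=
      Function.leftInverse_invFun G1.nd (i, j)
    show G2.x (Function.invFun e1 (e1 (i, j))).1 (Function.invFun e1 (e1 (i, j))).2 = G2.x i j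
    rw [hli]
  have hinj : Set.InjOn f (V : Set α) := by
    intro z hz w hw hzw
    obtain ⟨i, j, rfl⟩ := G1.surj z (Finset.mem_coe.mp hz)
    obtain ⟨k, l, rfl⟩ := G1.surj w (Finset.mem_coe.mp hw)
    rw [hfe, hfe] at hzw
    have h2 := G2.nd (a₁ := (i, j)) (a₂ := (k, l)) hzw
    rw [Prod.ext_iff] at h2
    simp only at h2
    rw [h2.1, h2.2]
  have hmaps : Set.MapsTo f (V : Set α) (V : Set α) := by
    intro z hz
    obtain ⟨i, j, rfl⟩ := G1.surj z (Finset.mem_coe.mp hz)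
    rw [hfe]
    exact Finset.mem_coe.mpr (G2.mem i j)
  have hsurj : Set.SurjOn f (V : Set α) (V : Set α) := by
    intro z hz
    obtain ⟨i, j, rfl⟩ := G2.surj z (Finset.mem_coe.mp hz)
    exact ⟨G1.x i j, Finset.mem_coe.mpr (G1.mem i j), hfe i j⟩
  have himgcancel : ∀ s t : Finset α, s ⊆ V → t ⊆ V → s.image f = t.image f → s = t := by
    intro s t hs ht hst
    ext z
    constructor
    · intro hzs
      have : f z ∈ t.image f := by rw [← hst]; exact Finset.mem_image_of_mem f hzs
      obtain ⟨w, hw, hwz⟩ := Finset.mem_image.mp this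
      have := hinj (Finset.mem_coe.mpr (ht hw)) (Finset.mem_coe.mpr (hs hzs)) hwz
      rwa [← this]
    · intro hzt
      have : f z ∈ s.image f := by rw [hst]; exact Finset.mem_image_of_mem f hzt
      obtain ⟨w, hw, hwz⟩ := Finset.mem_image.mp this
      have := hinj (Finset.mem_coe.mpr (hs hw)) (Finset.mem_coe.mpr (ht hzt)) hwz
      rwa [← this]
  refine ⟨f, ⟨hmaps, hinj, hsurj⟩, ?_⟩
  intro b hbV
  have hrowimg : ∀ i, Finset.image f {G1.x i 0, G1.x i 1, G1.x i 2} =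
      ({G2.x i 0, G2.x i 1, G2.x i 2} : Finset α) := by
    intro i
    rw [Finset.image_insert, Finset.image_insert, Finset.image_singleton, hfe, hfe, hfe]
  have htrimg : ∀ c d : Fin 3, Finset.image f {G1.x 0 c, G1.x 1 d, G1.x 2 (-(c + d))} =
      ({G2.x 0 c, G2.x 1 d, G2.x 2 (-(c + d))} : Finset α) := by
    intro c d
    rw [Finset.image_insert, Finset.image_insert, Finset.image_singleton, hfe, hfe, hfe]
  have hrowsub : ∀ (G : Grid V B₁) (i : Fin 3),
      ({G.x i 0, G.x i 1, G.x i 2} : Finset α) ⊆ V := by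
    intro G i z hz
    simp only [Finset.mem_insert, Finset.mem_singleton] at hz
    rcases hz with rfl | rfl | rfl <;> exact G.mem _ _
  constructor
  · intro hb
    rcases (grid_block_iff hB₁ G1 hbV).mp hb with ⟨i, rfl⟩ | ⟨c, d, rfl⟩
    · rw [hrowimg]; exact G2.row i
    · rw [htrimg]; exact G2.tr c d
  · intro hb
    have hbV2 : b.image f ⊆ V := by
      intro z hz
      obtain ⟨w, hw, rfl⟩ := Finset.mem_image.mp hz
      obtain ⟨i, j, rfl⟩ := G1.surj w (hbV hw)
      rw [hfe]
      exact G2.mem i j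
    rcases (grid_block_iff hB₂ G2 hbV2).mp hb with ⟨i, him⟩ | ⟨c, d, him⟩
    · have hb1 : b = {G1.x i 0, G1.x i 1, G1.x i 2} := by
        apply himgcancel _ _ hbV (hrowsub G1 i)
        rw [him, hrowimg]
      rw [hb1]; exact G1.row i
    · have hb1 : b = {G1.x 0 c, G1.x 1 d, G1.x 2 (-(c + d))} := by
        apply himgcancel _ _ hbV ?_
        · rw [him, htrimg]
        · intro z hz
          simp only [Finset.mem_insert, Finset.mem_singleton] at hz
          rcases hz with rfl | rfl | rfl <;> exact G1.mem _ _
      rw [hb1]; exact G1.tr c d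
end
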